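/- Let S denote Σ_d C(p(d), 2), the sum over all diagonals d of the convex (n+3)-gon G_{n+3}, where p(d) is the number of diagonals crossing d. If n = 2k−1 is odd (k ≥ 1), then S = ((n+3)/2)·Σ_{l=1}^{k−1} (4l²k² − 2k(2l³+l) + l⁴ + l²) + ((n+3)/4)·k²(k²−1). If n = 2k−2 is even (k ≥ 2), then S = ((n+3)/2)·Σ_{l=1}^{k−1} (4l²k² − 2k(2l³+2l²+l) + (l⁴+2l³+2l²+l)). -/

import Mathlib

/-- A diagonal of the convex `N`-gon with vertices labelled `1, …, N` in cyclic order: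
a pair `(i, j)` with `1 ≤ i`, `i + 2 ≤ j ≤ N`, excluding the side `(1, N)`. -/
def IsDiag (N : ℕ) (d : ℕ × ℕ) : Prop :=
  1 ≤ d.1 ∧ d.1 + 2 ≤ d.2 ∧ d.2 ≤ N ∧ ¬(d.1 = 1 ∧ d.2 = N)

instance (N : ℕ) (d : ℕ × ℕ) : Decidable (IsDiag N d) := by
  unfold IsDiag; infer_instance

/-- Two diagonals of a convex polygon cross (intersect at an interior point). -/
def Crosses (d e : ℕ × ℕ) : Prop :=
  (d.1 < e.1 ∧ e.1 < d.2 ∧ d.2 < e.2) ∨ (e.1 < d.1 ∧ d.1 < e.2 ∧ e.2 < d.2)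

instance (d e : ℕ × ℕ) : Decidable (Crosses d e) := by
  unfold Crosses; infer_instance

/-- The finite set of all diagonals of the convex `N`-gon. -/
def Diags (N : ℕ) : Finset (ℕ × ℕ) :=
  (Finset.range (N + 1) ×ˢ Finset.range (N + 1)).filter (IsDiag N)

/-- `crossNum N d` is the number of diagonals of the convex `N`-gon crossing `d`
(the number `p(d)` of distinguished points on `d`). -/
def crossNum (N : ℕ) (d : ℕ × ℕ) : ℕ :=
  ((Diags N).filter (fun e => Crosses d e)).card

/-- The crossing number of the diagonal `(i, i+l+1)` of the `(n+3)`-gon is `l(n+1-l)`. -/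
lemma crossNum_eq (n i l : ℕ) (hi : 1 ≤ i) (hl : 1 ≤ l) (hln : l ≤ n)
    (hup : i + l + 1 ≤ n + 3) :
    crossNum (n + 3) (i, i + l + 1) = l * (n + 1 - l) := by
  have hset : (Diags (n + 3)).filter (fun e => Crosses (i, i + l + 1) e)
      = (Finset.Ioo i (i + l + 1) ×ˢ Finset.Ioc (i + l + 1) (n + 3))
        ∪ (Finset.Icc 1 (i - 1) ×ˢ Finset.Ioo i (i + l + 1)) := by
    ext ⟨a, b⟩
    simp only [Diags, Finset.mem_filter]
    simp only [Diags, IsDiag, Crosses, Finset.mem_filter, Finset.mem_product,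
      Finset.mem_range, Finset.mem_union, Finset.mem_Ioo, Finset.mem_Ioc, Finset.mem_Icc]
    omega
  have hdisj : Disjoint (Finset.Ioo i (i + l + 1) ×ˢ Finset.Ioc (i + l + 1) (n + 3))
      (Finset.Icc 1 (i - 1) ×ˢ Finset.Ioo i (i + l + 1)) := by
    rw [Finset.disjoint_left]
    rintro ⟨a, b⟩ h1 h2
    simp only [Finset.mem_product, Finset.mem_Ioo, Finset.mem_Ioc, Finset.mem_Icc] at h1 h2
    omega
  unfold crossNum
  rw [hset, Finset.card_union_of_disjoint hdisj, Finset.card_product, Finset.card_product,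
    Nat.card_Ioo, Nat.card_Ioc, Nat.card_Icc]
  have h1 : i + l + 1 - i - 1 = l := by omega
  have h2 : n + 3 - (i + l + 1) + (i - 1 + 1 - 1) = n + 1 - l := by omega
  rw [h1]
  calc l * (n + 3 - (i + l + 1)) + (i - 1 + 1 - 1) * l
      = l * ((n + 3 - (i + l + 1)) + (i - 1 + 1 - 1)) := by ring
    _ = l * (n + 1 - l) := by rw [h2]

/-- Grouping the diagonals by their length. -/
lemma sum_diags_eq (n : ℕ) :
    (∑ d ∈ Diags (n + 3), ((Nat.choose (crossNum (n + 3) d) 2 : ℕ) : ℚ))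
      = ∑ l ∈ Finset.Icc 1 n,
          ((n + 2 - l : ℕ) : ℚ) * ((Nat.choose (l * (n + 1 - l)) 2 : ℕ) : ℚ) := by
  have h1 : (∑ d ∈ Diags (n + 3), ((Nat.choose (crossNum (n + 3) d) 2 : ℕ) : ℚ))
      = ∑ x ∈ (Finset.Icc 1 n).sigma (fun l => Finset.Icc 1 (n + 2 - l)),
          ((Nat.choose (crossNum (n + 3) (x.2, x.2 + x.1 + 1)) 2 : ℕ) : ℚ) := by
    apply Finset.sum_nbij' (i := fun d => (⟨d.2 - d.1 - 1, d.1⟩ : Σ _ : ℕ, ℕ))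
      (j := fun x => (x.2, x.2 + x.1 + 1))
    · rintro ⟨a, b⟩ hd
      simp only [Diags, IsDiag, Finset.mem_filter, Finset.mem_product, Finset.mem_range] at hd
      simp only [Finset.mem_sigma, Finset.mem_Icc]
      omega
    · rintro ⟨l, i⟩ hx
      simp only [Finset.mem_sigma, Finset.mem_Icc] at hx
      simp only [Diags, IsDiag, Finset.mem_filter, Finset.mem_product, Finset.mem_range]
      omega
    · rintro ⟨a, b⟩ hd
      simp only [Diags, IsDiag, Finset.mem_filter, Finset.mem_product, Finset.mem_range] at hd
      dsimp only
      have h : a + (b - a - 1) + 1 = b := by omega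
      rw [h]
    · rintro ⟨l, i⟩ hx
      simp only [Finset.mem_sigma, Finset.mem_Icc] at hx
      dsimp only
      have h : i + l + 1 - i - 1 = l := by omega
      rw [h]
    · rintro ⟨a, b⟩ hd
      simp only [Diags, IsDiag, Finset.mem_filter, Finset.mem_product, Finset.mem_range] at hd
      have : a + (b - a - 1) + 1 = b := by omega
      simp only [this]
  rw [h1, Finset.sum_sigma]
  apply Finset.sum_congr rfl
  intro l hl
  simp only [Finset.mem_Icc] at hl
  have hcard : (Finset.Icc 1 (n + 2 - l)).card = n + 2 - l := by
    rw [Nat.card_Icc]; omega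
  calc ∑ i ∈ Finset.Icc 1 (n + 2 - l),
        ((Nat.choose (crossNum (n + 3) (i, i + l + 1)) 2 : ℕ) : ℚ)
      = ∑ i ∈ Finset.Icc 1 (n + 2 - l),
          ((Nat.choose (l * (n + 1 - l)) 2 : ℕ) : ℚ) := by
        apply Finset.sum_congr rfl
        intro i hi
        simp only [Finset.mem_Icc] at hi
        rw [crossNum_eq n i l hi.1 hl.1 hl.2 (by omega)]
    _ = ((n + 2 - l : ℕ) : ℚ) * ((Nat.choose (l * (n + 1 - l)) 2 : ℕ) : ℚ) := by
        rw [Finset.sum_const, hcard, nsmul_eq_mul]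

lemma sum_Icc_reflect (F : ℕ → ℚ) (a b c : ℕ) (hc : b ≤ c) (ha : a ≤ c) :
    ∑ l ∈ Finset.Icc a b, F l = ∑ l ∈ Finset.Icc (c - b) (c - a), F (c - l) := by
  apply Finset.sum_nbij' (i := fun l => c - l) (j := fun l => c - l)
  · intro x hx; simp only [Finset.mem_Icc] at *; omega
  · intro x hx; simp only [Finset.mem_Icc] at *; omega
  · intro x hx; simp only [Finset.mem_Icc] at hx; omega
  · intro x hx; simp only [Finset.mem_Icc] at hx; omega
  · intro x hx
    simp only [Finset.mem_Icc] at hx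
    have h : c - (c - x) = x := by omega
    rw [h]

/-- `G n l = C(l(n+1-l), 2)` as a rational number. -/
noncomputable def G (n l : ℕ) : ℚ := ((Nat.choose (l * (n + 1 - l)) 2 : ℕ) : ℚ)

lemma key_sum (n : ℕ) (S : ℚ)
    (hS : S = ∑ l ∈ Finset.Icc 1 n,
        ((n + 2 - l : ℕ) : ℚ) * ((Nat.choose (l * (n + 1 - l)) 2 : ℕ) : ℚ)) :
    S = ((n : ℚ) + 3) / 2 * ∑ l ∈ Finset.Icc 1 n, G n l := by
  have hG : ∀ l : ℕ, ((Nat.choose (l * (n + 1 - l)) 2 : ℕ) : ℚ) = G n l := fun l => rfl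
  simp only [hG] at hS
  have hS2 : S = ∑ l ∈ Finset.Icc 1 n, ((l : ℚ) + 1) * G n l := by
    rw [hS,
      sum_Icc_reflect (fun l => ((n + 2 - l : ℕ) : ℚ) * G n l) 1 n (n + 1) (by omega) (by omega)]
    have e1 : n + 1 - n = 1 := by omega
    have e2 : n + 1 - 1 = n := by omega
    rw [e1, e2]
    apply Finset.sum_congr rfl
    intro l hl
    simp only [Finset.mem_Icc] at hl
    have c1 : ((n + 2 - (n + 1 - l) : ℕ) : ℚ) = (l : ℚ) + 1 := by
      have : n + 2 - (n + 1 - l) = l + 1 := by omega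
      rw [this]; push_cast; ring
    have c2 : G n (n + 1 - l) = G n l := by
      unfold G
      have e3 : n + 1 - (n + 1 - l) = l := by omega
      rw [e3, mul_comm]
    rw [c1, c2]
  have hSsum : S = ∑ l ∈ Finset.Icc 1 n, ((n : ℚ) + 2 - l) * G n l := by
    rw [hS]
    apply Finset.sum_congr rfl
    intro l hl
    simp only [Finset.mem_Icc] at hl
    have : ((n + 2 - l : ℕ) : ℚ) = (n : ℚ) + 2 - l := by
      rw [Nat.cast_sub (by omega)]; push_cast; ring
    rw [this]
  have h2S : 2 * S = ((n : ℚ) + 3) * ∑ l ∈ Finset.Icc 1 n, G n l := by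
    calc 2 * S = S + S := by ring
      _ = ∑ l ∈ Finset.Icc 1 n, (((n : ℚ) + 2 - l) * G n l + ((l : ℚ) + 1) * G n l) := by
          rw [Finset.sum_add_distrib, ← hSsum, ← hS2]
      _ = ∑ l ∈ Finset.Icc 1 n, ((n : ℚ) + 3) * G n l := by
          apply Finset.sum_congr rfl; intro l _; ring
      _ = ((n : ℚ) + 3) * ∑ l ∈ Finset.Icc 1 n, G n l := by rw [Finset.mul_sum]
  linarith [h2S]

lemma split_odd (n k : ℕ) (hnk : n + 1 = 2 * k) (hk : 1 ≤ k) :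
    ∑ l ∈ Finset.Icc 1 n, G n l
      = 2 * ∑ l ∈ Finset.Icc 1 (k - 1), G n l + G n k := by
  have h1 : Finset.Icc 1 n = Finset.Ioc 0 n := by ext x; simp; omega
  have h2 : Finset.Icc 1 (k - 1) = Finset.Ioc 0 (k - 1) := by ext x; simp; omega
  have h3 : Finset.Icc k n = Finset.Ioc (k - 1) n := by ext x; simp; omega
  have hsplit := Finset.sum_Ioc_consecutive (G n) (Nat.zero_le (k - 1)) (show k - 1 ≤ n by omega)
  have hrefl : ∑ l ∈ Finset.Icc k n, G n l = ∑ l ∈ Finset.Icc 1 k, G n (2 * k - l) := by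
    have := sum_Icc_reflect (G n) k n (2 * k) (by omega) (by omega)
    rw [this, show 2 * k - n = 1 by omega, show 2 * k - k = k by omega]
  have hGsymm : ∀ l ∈ Finset.Icc 1 k, G n (2 * k - l) = G n l := by
    intro l hl
    simp only [Finset.mem_Icc] at hl
    unfold G
    have e1 : n + 1 - (2 * k - l) = l := by omega
    have e2 : 2 * k - l = n + 1 - l := by omega
    rw [e1, ← e2, mul_comm]
  obtain ⟨j, rfl⟩ : ∃ j, k = j + 1 := ⟨k - 1, by omega⟩
  have htop : ∑ l ∈ Finset.Icc 1 (j + 1), G n l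
      = ∑ l ∈ Finset.Icc 1 j, G n l + G n (j + 1) :=
    Finset.sum_Icc_succ_top (by omega) (G n)
  rw [h1, ← hsplit, ← h2, ← h3, hrefl, Finset.sum_congr rfl hGsymm, htop]
  simp only [Nat.add_sub_cancel]
  ring

lemma split_even (n k : ℕ) (hnk : n + 2 = 2 * k) (hk : 2 ≤ k) :
    ∑ l ∈ Finset.Icc 1 n, G n l = 2 * ∑ l ∈ Finset.Icc 1 (k - 1), G n l := by
  have h1 : Finset.Icc 1 n = Finset.Ioc 0 n := by ext x; simp; omega
  have h2 : Finset.Icc 1 (k - 1) = Finset.Ioc 0 (k - 1) := by ext x; simp; omega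
  have h3 : Finset.Icc k n = Finset.Ioc (k - 1) n := by ext x; simp; omega
  have hsplit := Finset.sum_Ioc_consecutive (G n) (Nat.zero_le (k - 1)) (show k - 1 ≤ n by omega)
  have hrefl : ∑ l ∈ Finset.Icc k n, G n l
      = ∑ l ∈ Finset.Icc 1 (k - 1), G n (2 * k - 1 - l) := by
    have := sum_Icc_reflect (G n) k n (2 * k - 1) (by omega) (by omega)
    rw [this, show 2 * k - 1 - n = 1 by omega, show 2 * k - 1 - k = k - 1 by omega]
  have hGsymm : ∀ l ∈ Finset.Icc 1 (k - 1), G n (2 * k - 1 - l) = G n l := by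
    intro l hl
    simp only [Finset.mem_Icc] at hl
    unfold G
    have e1 : n + 1 - (2 * k - 1 - l) = l := by omega
    have e2 : 2 * k - 1 - l = n + 1 - l := by omega
    rw [e1, ← e2, mul_comm]
  rw [h1, ← hsplit, ← h2, ← h3, hrefl, Finset.sum_congr rfl hGsymm]
  ring

lemma G_cast (n l : ℕ) (hl : l ≤ n) :
    G n l = ((l : ℚ) * ((n : ℚ) + 1 - l)) * ((l : ℚ) * ((n : ℚ) + 1 - l) - 1) / 2 := by
  unfold G
  rw [Nat.cast_choose_two]
  have : ((l * (n + 1 - l) : ℕ) : ℚ) = (l : ℚ) * ((n : ℚ) + 1 - l) := by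
    rw [Nat.cast_mul, Nat.cast_sub (by omega)]
    push_cast; ring
  rw [this]

/-- Lemma 2.5 of the paper (with the misprint in the odd case corrected): closed formulae
for the number `S_{n+3} = Σ_d C(p(d), 2)` of distinguished segments, according to the
parity of `n`. -/
theorem distinguished_segments_formula (n k : ℕ) :
    (n + 1 = 2 * k → 1 ≤ k →
      (∑ d ∈ Diags (n + 3), Nat.choose (crossNum (n + 3) d) 2 : ℚ)
        = ((n : ℚ) + 3) / 2
            * ∑ l ∈ Finset.Icc 1 (k - 1),
                (4 * (l : ℚ) ^ 2 * (k : ℚ) ^ 2 - 2 * (k : ℚ) * (2 * (l : ℚ) ^ 3 + (l : ℚ))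
                  + (l : ℚ) ^ 4 + (l : ℚ) ^ 2)
          + ((n : ℚ) + 3) / 4 * ((k : ℚ) ^ 2 * ((k : ℚ) ^ 2 - 1))) ∧
    (n + 2 = 2 * k → 2 ≤ k →
      (∑ d ∈ Diags (n + 3), Nat.choose (crossNum (n + 3) d) 2 : ℚ)
        = ((n : ℚ) + 3) / 2
            * ∑ l ∈ Finset.Icc 1 (k - 1),
                (4 * (l : ℚ) ^ 2 * (k : ℚ) ^ 2
                  - 2 * (k : ℚ) * (2 * (l : ℚ) ^ 3 + 2 * (l : ℚ) ^ 2 + (l : ℚ))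
                  + ((l : ℚ) ^ 4 + 2 * (l : ℚ) ^ 3 + 2 * (l : ℚ) ^ 2 + (l : ℚ)))) := by
  have hkey := key_sum n _ (sum_diags_eq n)
  constructor
  · intro hnk hk
    have hcast : (n : ℚ) + 1 = 2 * (k : ℚ) := by exact_mod_cast hnk
    have hT : (∑ l ∈ Finset.Icc 1 (k - 1),
        (4 * (l : ℚ) ^ 2 * (k : ℚ) ^ 2 - 2 * (k : ℚ) * (2 * (l : ℚ) ^ 3 + (l : ℚ))
          + (l : ℚ) ^ 4 + (l : ℚ) ^ 2))
        = 2 * ∑ l ∈ Finset.Icc 1 (k - 1), G n l := by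
      rw [Finset.mul_sum]
      apply Finset.sum_congr rfl
      intro l hl
      simp only [Finset.mem_Icc] at hl
      rw [G_cast n l (by omega)]
      have h1 : (n : ℚ) + 1 - (l : ℚ) = 2 * (k : ℚ) - (l : ℚ) := by linarith
      rw [h1]
      ring
    have hGk : G n k = (k : ℚ) ^ 2 * ((k : ℚ) ^ 2 - 1) / 2 := by
      rw [G_cast n k (by omega)]
      have h1 : (n : ℚ) + 1 - (k : ℚ) = (k : ℚ) := by linarith
      rw [h1]
      ring
    rw [hkey, split_odd n k hnk hk, hT, hGk]
    ring
  · intro hnk hk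
    have hcast : (n : ℚ) + 2 = 2 * (k : ℚ) := by exact_mod_cast hnk
    have hT : (∑ l ∈ Finset.Icc 1 (k - 1),
        (4 * (l : ℚ) ^ 2 * (k : ℚ) ^ 2
          - 2 * (k : ℚ) * (2 * (l : ℚ) ^ 3 + 2 * (l : ℚ) ^ 2 + (l : ℚ))
          + ((l : ℚ) ^ 4 + 2 * (l : ℚ) ^ 3 + 2 * (l : ℚ) ^ 2 + (l : ℚ))))
        = 2 * ∑ l ∈ Finset.Icc 1 (k - 1), G n l := by
      rw [Finset.mul_sum]
      apply Finset.sum_congr rfl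
      intro l hl
      simp only [Finset.mem_Icc] at hl
      rw [G_cast n l (by omega)]
      have h1 : (n : ℚ) + 1 - (l : ℚ) = 2 * (k : ℚ) - 1 - (l : ℚ) := by linarith
      rw [h1]
      ring
    rw [hkey, split_even n k hnk hk, hT]
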